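/- Let f : ℝ^k → ℝ^k be Lipschitz with constant L and satisfy ⟨f(x+v) − f(x), v⟩ ≥ δ|v|² for all x, v ∈ ℝ^k, with δ > 0. Write points of ℝ^k = ℝ^{k-1} × ℝ as (x, s). Then the function g : ℝ^{k-1} → ℝ assigning to each x the unique root s of f_k(x, s) = 0 (where f_k is the last component) is Lipschitz with constant L/δ. -/

import Mathlib

open scoped RealInnerProductSpace

lemma comp_le_norm {n : ℕ} (w : EuclideanSpace ℝ (Fin n)) (i : Fin n) : |w i| ≤ ‖w‖ := by
  rw [EuclideanSpace.norm_eq]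
  have : |w i| = Real.sqrt (‖w i‖ ^ 2) := by
    rw [Real.sqrt_sq_eq_abs]; simp [abs_abs]
  rw [this]
  apply Real.sqrt_le_sqrt
  exact Finset.single_le_sum (f := fun j => ‖w j‖ ^ 2) (fun j _ => by positivity) (Finset.mem_univ i)

/-- Let `f : ℝ^{k+1} → ℝ^{k+1}` be Lipschitz with constant `L` and coercive with
constant `δ > 0`, i.e. `⟪f (x + v) - f x, v⟫ ≥ δ ‖v‖²`.  Writing points of `ℝ^{k+1}` as pairs
`(x, s) ∈ ℝ^k × ℝ` (via `Fin.snoc`), the function `g : ℝ^k → ℝ` assigning to each `x` the (unique)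
root `s` of `f_{k+1}(x, s) = 0` (where `f_{k+1}` is the last component of `f`) is Lipschitz with
constant `L / δ`. -/
theorem implicit_root_function_lipschitz
    (k : ℕ) (f : EuclideanSpace ℝ (Fin (k + 1)) → EuclideanSpace ℝ (Fin (k + 1)))
    (L δ : ℝ) (hδ : 0 < δ)
    (hf : ∀ x y : EuclideanSpace ℝ (Fin (k + 1)), dist (f x) (f y) ≤ L * dist x y)
    (hcoer : ∀ x v : EuclideanSpace ℝ (Fin (k + 1)), δ * ‖v‖ ^ 2 ≤ ⟪f (x + v) - f x, v⟫)
    (g : EuclideanSpace ℝ (Fin k) → ℝ)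
    (hg : ∀ x : EuclideanSpace ℝ (Fin k),
      f (WithLp.toLp 2 (Fin.snoc x (g x) : Fin (k + 1) → ℝ) : EuclideanSpace ℝ (Fin (k + 1))) (Fin.last k) = 0) :
    ∀ x y : EuclideanSpace ℝ (Fin k), |g x - g y| ≤ (L / δ) * dist x y := by
  -- L ≥ δ
  have hL : δ ≤ L := by
    set v : EuclideanSpace ℝ (Fin (k + 1)) := EuclideanSpace.single 0 1 with hv
    have hnv : ‖v‖ = 1 := by simp [hv]
    have h1 := hcoer 0 v
    have h2 : ⟪f (0 + v) - f 0, v⟫ ≤ ‖f (0 + v) - f 0‖ * ‖v‖ := real_inner_le_norm _ _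
    have h3 : ‖f (0 + v) - f 0‖ ≤ L * dist (0 + v) 0 := by
      rw [← dist_eq_norm]; exact hf _ _
    have h4 : dist (0 + v : EuclideanSpace ℝ (Fin (k+1))) 0 = 1 := by
      simp [dist_eq_norm, hnv]
    rw [hnv] at h1 h2
    rw [h4] at h3
    nlinarith [h1, h2, h3]
  intro x y
  set a : EuclideanSpace ℝ (Fin (k + 1)) := WithLp.toLp 2 (Fin.snoc y (g y) : Fin (k + 1) → ℝ) with ha
  set v : EuclideanSpace ℝ (Fin (k + 1)) := WithLp.toLp 2 (Fin.snoc 0 (g x - g y) : Fin (k + 1) → ℝ) with hv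
  set b : EuclideanSpace ℝ (Fin (k + 1)) := WithLp.toLp 2 (Fin.snoc y (g x) : Fin (k + 1) → ℝ) with hb
  set c : EuclideanSpace ℝ (Fin (k + 1)) := WithLp.toLp 2 (Fin.snoc x (g x) : Fin (k + 1) → ℝ) with hc
  have hav : a + v = b := by
    ext i
    refine Fin.lastCases ?_ ?_ i
    · show a (Fin.last k) + v (Fin.last k) = b (Fin.last k)
      simp [ha, hv, hb]
    · intro j
      show a (Fin.castSucc j) + v (Fin.castSucc j) = b (Fin.castSucc j)
      simp [ha, hv, hb]
  have hvnorm : ‖v‖ ^ 2 = (g x - g y) ^ 2 := by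
    rw [← real_inner_self_eq_norm_sq, PiLp.inner_apply, Fin.sum_univ_castSucc]
    simp [hv, RCLike.inner_apply]
  have hinner : ⟪f (a + v) - f a, v⟫ = f b (Fin.last k) * (g x - g y) := by
    rw [hav, PiLp.inner_apply, Fin.sum_univ_castSucc]
    have hfa : f a (Fin.last k) = 0 := hg y
    simp [hv, RCLike.inner_apply, hfa]
    ring
  have hcoer' := hcoer a v
  rw [hinner, hvnorm] at hcoer'
  -- bound |f b (last k)|
  have hfc : f c (Fin.last k) = 0 := hg x
  have hfb : |f b (Fin.last k)| ≤ L * dist x y := by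
    have h1 : |f b (Fin.last k)| = |(f b - f c) (Fin.last k)| := by
      simp [hfc]
    have h2 : |(f b - f c) (Fin.last k)| ≤ ‖f b - f c‖ := comp_le_norm _ _
    have h3 : ‖f b - f c‖ ≤ L * dist b c := by rw [← dist_eq_norm]; exact hf _ _
    have h4 : dist b c = dist y x := by
      rw [EuclideanSpace.dist_eq, EuclideanSpace.dist_eq, Fin.sum_univ_castSucc]
      simp [hb, hc]
    rw [h1]
    calc |(f b - f c) (Fin.last k)| ≤ ‖f b - f c‖ := h2
      _ ≤ L * dist b c := h3
      _ = L * dist x y := by rw [h4, dist_comm]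
  -- finish
  rcases eq_or_ne (g x) (g y) with h | h
  · rw [h, sub_self, abs_zero]
    exact mul_nonneg (div_nonneg (hδ.le.trans hL) hδ.le) dist_nonneg
  have habs : 0 < |g x - g y| := abs_pos.mpr (sub_ne_zero.mpr h)
  have key : δ * |g x - g y| ^ 2 ≤ L * dist x y * |g x - g y| := by
    calc δ * |g x - g y| ^ 2 = δ * (g x - g y) ^ 2 := by rw [sq_abs]
      _ ≤ f b (Fin.last k) * (g x - g y) := hcoer'
      _ ≤ |f b (Fin.last k) * (g x - g y)| := le_abs_self _
      _ = |f b (Fin.last k)| * |g x - g y| := abs_mul _ _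
      _ ≤ L * dist x y * |g x - g y| := by
          apply mul_le_mul_of_nonneg_right hfb (abs_nonneg _)
  rw [div_mul_eq_mul_div, le_div_iff₀ hδ]
  nlinarith [key, habs]
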